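/- Let μ : {a,b}* → {a,b}* be an injective morphism. Then μ is primitivity-preserving if and only if for all morphisms ψ, χ : {a,b}* → {a,b}* such that μ = ψ ∘ χ, writing χ = (p, q), the morphism χ is primitivity-preserving and ψ is an injective morphism with P^ψ ∩ {p, q}⁺ = ∅ (no ψ-power is a nonempty concatenation of copies of p and q). -/
import Mathlib


/-- `wpow z k` is the word `z` repeated `k` times, i.e. `z^k`. -/
def wpow {α : Type*} (z : List α) (k : ℕ) : List α := (List.replicate k z).flatten

/-- Apply the morphism determined by the letter images `f` to the word `w`. -/
def mApply {α β : Type*} (f : α → List β) (w : List α) : List β := w.flatMap f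

/-- A nonempty word is primitive if it is a `k`-th power only for `k = 1`. -/
def Primitive {α : Type*} (w : List α) : Prop :=
  w ≠ [] ∧ ∀ (z : List α) (k : ℕ), w = wpow z k → k = 1

/-- A morphism is primitivity-preserving if it maps primitive words to primitive words. -/
def PrimPreserving {α β : Type*} (f : α → List β) : Prop :=
  ∀ w, Primitive w → Primitive (mApply f w)

/-- A primitive word `w` is a `μ`-power (for `μ` given by letter images `f`)
if `μ(w) = z^k` for a primitive `z` and `k > 1`.  `P^μ = {w | MuPower f w}`. -/
def MuPower {α β : Type*} (f : α → List β) (w : List α) : Prop :=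
  Primitive w ∧ ∃ (z : List β) (k : ℕ), Primitive z ∧ 1 < k ∧ mApply f w = wpow z k

/-- `u` is a circular factor of `w`: a factor of some rotation of `w`. -/
def CircFactor {α : Type*} (u w : List α) : Prop :=
  ∃ w', w ~r w' ∧ u <:+: w'

/-- The set of circular factors of words in the language `L`. -/
def CircFactLang {α : Type*} (L : Set (List α)) : Set (List α) :=
  {u | ∃ w ∈ L, CircFactor u w}

/-- `(u₁, u₂)` is a synchronization pair of `u₁ ++ u₂` on `μ(L)`. -/
def SyncPair {α β : Type*} (f : α → List β) (L : Set (List α)) (u₁ u₂ : List β) : Prop :=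
  ∀ (v₁ v₂ : List β) (g : List α), g ∈ CircFactLang L →
    v₁ ++ (u₁ ++ u₂) ++ v₂ = mApply f g →
    ∃ g₁ ∈ CircFactLang L, ∃ g₂ ∈ CircFactLang L,
      g₁ ++ g₂ = g ∧ v₁ ++ u₁ = mApply f g₁ ∧ u₂ ++ v₂ = mApply f g₂

/-- `u` admits a synchronization pair on `μ(L)`. -/
def HasSyncPair {α β : Type*} (f : α → List β) (L : Set (List α)) (u : List β) : Prop :=
  ∃ u₁ u₂, u = u₁ ++ u₂ ∧ SyncPair f L u₁ u₂

/-- `μ` is synchronizing with finite delay on `μ(L)`. -/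
def SyncFiniteDelay {α β : Type*} (f : α → List β) (L : Set (List α)) : Prop :=
  ∃ K : ℕ, 0 < K ∧ ∀ w ∈ L, ∀ u, CircFactor u (mApply f w) → K ≤ u.length →
    HasSyncPair f L u

/-- An (injective) morphism is recognizable: every nonempty word in the image and every
rotation of it has a unique factorization `w' = q ⬝ μ(z) ⬝ p` with `p ⬝ q = μ(c)`, `p ≠ ε`. -/
def Recognizable {α β : Type*} (f : α → List β) : Prop :=
  ∀ w ∈ Set.range (mApply f), w ≠ [] → ∀ w', w ~r w' →
    ∃! pqzc : List β × List β × List α × α,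
      pqzc.1 ≠ [] ∧ w' = pqzc.2.1 ++ mApply f pqzc.2.2.1 ++ pqzc.1 ∧
        pqzc.1 ++ pqzc.2.1 = f pqzc.2.2.2

/-- The Burrows–Wheeler transform: last letters of the lexicographically sorted rotations. -/
def bwt {Γ : Type*} [LinearOrder Γ] (w : List Γ) : List Γ :=
  (List.insertionSort (· ≤ ·) ((List.range w.length).map (fun i => w.rotate i))).filterMap
    List.getLast?

/-- The number of maximal runs of equal consecutive letters. -/
def runCount {Γ : Type*} [DecidableEq Γ] (l : List Γ) : ℕ :=
  (l.destutter (· ≠ ·)).length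

/-- `r(w)`: the number of BWT-runs of `w`. -/
def rBWT {Γ : Type*} [LinearOrder Γ] (w : List Γ) : ℕ := runCount (bwt w)

/-- The morphism `ρ_p = (a, b^p)`, with `a = false`, `b = true`. -/
def rho (p : ℕ) : Bool → List Bool := fun c => bif c then List.replicate p true else [false]

/-- The exchange morphism `E = (b, a)`. -/
def Eswap : Bool → List Bool := fun c => [!c]

theorem mApply_nil {α β} (f : α → List β) : mApply f [] = [] := rfl
theorem mApply_cons {α β} (f : α → List β) (c w) : mApply f (c :: w) = f c ++ mApply f w := rfl
theorem mApply_append {α β} (f : α → List β) (x y) :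
    mApply f (x ++ y) = mApply f x ++ mApply f y := by simp [mApply]
theorem mApply_comp {α β γ} (ψ : β → List γ) (χ : α → List β) (w : List α) :
    mApply (fun c => mApply ψ (χ c)) w = mApply ψ (mApply χ w) := by
  induction w with
  | nil => rfl
  | cons c w ih => rw [mApply_cons, mApply_cons, mApply_append, ih]

theorem wpow_zero {α} (z : List α) : wpow z 0 = [] := rfl
theorem wpow_one {α} (z : List α) : wpow z 1 = z := by
  rw [wpow, List.replicate_one, List.flatten_cons, List.flatten_nil, List.append_nil]
theorem wpow_succ {α} (z : List α) (k : ℕ) : wpow z (k + 1) = z ++ wpow z k := by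
  rw [wpow, List.replicate_succ, List.flatten_cons]; rfl
theorem wpow_add {α} (z : List α) (a b : ℕ) : wpow z (a + b) = wpow z a ++ wpow z b := by
  rw [wpow, wpow, wpow, List.replicate_add, List.flatten_append]
theorem mApply_wpow {α β} (f : α → List β) (z k) :
    mApply f (wpow z k) = wpow (mApply f z) k := by
  induction k with
  | zero => rfl
  | succ k ih => rw [wpow_succ, wpow_succ, mApply_append, ih]
theorem wpow_mul {α} (z : List α) (m k : ℕ) : wpow (wpow z m) k = wpow z (k * m) := by
  induction k with
  | zero => rw [Nat.zero_mul]; rfl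
  | succ k ih => rw [wpow_succ, Nat.succ_mul, Nat.add_comm, wpow_add, ih]
theorem length_wpow {α} (z : List α) (k : ℕ) : (wpow z k).length = k * z.length := by
  induction k with
  | zero => rw [Nat.zero_mul]; rfl
  | succ k ih => rw [wpow_succ, List.length_append, ih, Nat.succ_mul, Nat.add_comm]


theorem wpow_nil {α : Type*} (k : ℕ) : wpow ([] : List α) k = [] := by
  induction k with
  | zero => rfl
  | succ k ih => rw [wpow_succ, List.nil_append, ih]

theorem prim_root_aux {α : Type*} :
    ∀ n (w : List α), w.length ≤ n → w ≠ [] →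
      ∃ z m, Primitive z ∧ 1 ≤ m ∧ w = wpow z m := by
  intro n
  induction n with
  | zero =>
    intro w h hw
    exact absurd (List.eq_nil_of_length_eq_zero (Nat.le_zero.mp h)) hw
  | succ n ih =>
    intro w h hw
    by_cases hp : Primitive w
    · exact ⟨w, 1, hp, le_refl 1, (wpow_one w).symm⟩
    · rw [Primitive, not_and] at hp
      push_neg at hp
      obtain ⟨z, k, hzk, hk⟩ := hp hw
      have hk0 : k ≠ 0 := by
        rintro rfl
        exact hw hzk
      have hk2 : 2 ≤ k := by omega
      have hz : z ≠ [] := by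
        rintro rfl
        rw [wpow_nil] at hzk
        exact hw hzk
      have hzlen : 0 < z.length := List.length_pos_iff.mpr hz
      have hlen : z.length ≤ n := by
        have h1 : w.length = k * z.length := by rw [hzk, length_wpow]
        have h2 : 2 * z.length ≤ k * z.length := Nat.mul_le_mul_right _ hk2
        omega
      obtain ⟨z', m, hz', hm, hzm⟩ := ih z hlen hz
      refine ⟨z', k * m, hz', ?_, ?_⟩
      · have := Nat.mul_le_mul hk2 hm
        omega
      · rw [hzk, hzm, wpow_mul]

theorem prim_root {α : Type*} (w : List α) (hw : w ≠ []) :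
    ∃ z m, Primitive z ∧ 1 ≤ m ∧ w = wpow z m :=
  prim_root_aux w.length w le_rfl hw

def pf {α : Type*} (u v : List α) : Bool → List α := fun c => bif c then v else u

theorem mApply_eq_nil {α : Type*} (u v : List α) (hu : u ≠ []) (hv : v ≠ [])
    (z : List Bool) (h : mApply (pf u v) z = []) : z = [] := by
  cases z with
  | nil => rfl
  | cons c z' =>
    rw [mApply_cons] at h
    have := (List.append_eq_nil_iff.mp h).1
    cases c
    · exact absurd this hu
    · exact absurd this hv

def hmor₁ : Bool → List Bool := fun c => bif c then [false, true] else [false]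
def hmor₂ : Bool → List Bool := fun c => bif c then [true] else [true, false]

theorem decomp₁ {α : Type*} (u s : List α) (z : List Bool) :
    mApply (pf u (u ++ s)) z = mApply (pf u s) (mApply hmor₁ z) := by
  induction z with
  | nil => rfl
  | cons c z' ih =>
    cases c <;>
      simp only [mApply_cons, pf, hmor₁, cond_true, cond_false, ih, mApply_append] <;>
      simp [mApply_cons, mApply_nil, pf, List.append_assoc]

theorem decomp₂ {α : Type*} (v s : List α) (z : List Bool) :
    mApply (pf (v ++ s) v) z = mApply (pf s v) (mApply hmor₂ z) := by
  induction z with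
  | nil => rfl
  | cons c z' ih =>
    cases c <;>
      simp only [mApply_cons, pf, hmor₂, cond_true, cond_false, ih, mApply_append] <;>
      simp [mApply_cons, mApply_nil, pf, List.append_assoc]

theorem hmor₁_head (c : Bool) (z : List Bool) :
    ∃ t, mApply hmor₁ (c :: z) = false :: t ∧
      mApply hmor₁ (c :: z) = mApply hmor₁ [c] ++ mApply hmor₁ z := by
  cases c <;> exact ⟨_, rfl, by simp [mApply_cons, mApply_nil, List.append_assoc]⟩

theorem hmor₂_head (c : Bool) (z : List Bool) :
    ∃ t, mApply hmor₂ (c :: z) = true :: t := by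
  cases c
  · exact ⟨false :: mApply hmor₂ z, rfl⟩
  · exact ⟨mApply hmor₂ z, rfl⟩

theorem key {α : Type*} :
    ∀ n (u v : List α), u ≠ [] → v ≠ [] → u.length + v.length ≤ n →
      ∀ x y : List Bool,
        u ++ mApply (pf u v) x = v ++ mApply (pf u v) y →
        u ++ v = v ++ u := by
  intro n
  induction n using Nat.strong_induction_on with
  | _ n ih =>
  intro u v hu hv hn x y heq
  rcases lt_trichotomy u.length v.length with hlt | heql | hgt
  · -- v = u ++ s
    have hpre : u <+: v := by
      have hp1 : u <+: u ++ mApply (pf u v) x := List.prefix_append _ _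
      have hp2 : v <+: u ++ mApply (pf u v) x := by
        rw [heq]; exact List.prefix_append _ _
      exact List.prefix_of_prefix_length_le hp1 hp2 (Nat.le_of_lt hlt)
    obtain ⟨s, hs⟩ := hpre
    subst hs
    have hsne : s ≠ [] := by
      rintro rfl; rw [List.append_nil] at hlt; exact Nat.lt_irrefl _ hlt
    rw [List.append_assoc] at heq
    have h2 := List.append_cancel_left heq
    rw [decomp₁, decomp₁] at h2
    cases x with
    | nil =>
      rw [show mApply hmor₁ [] = [] from rfl, mApply_nil] at h2
      exact absurd (List.append_eq_nil_iff.mp h2.symm).1 hsne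
    | cons c x' =>
      obtain ⟨t, ht, -⟩ := hmor₁_head c x'
      rw [ht, mApply_cons] at h2
      have hlt' : u.length + s.length < n := by
        rw [List.length_append] at hn
        have := List.length_pos_iff.mpr hu
        omega
      have hcomm := ih _ hlt' u s hu hsne le_rfl t (mApply hmor₁ y) h2
      rw [List.append_assoc, ← hcomm]
  · rw [(List.append_inj heq heql).1]
  · -- u = v ++ s
    have hpre : v <+: u := by
      have hp1 : u <+: u ++ mApply (pf u v) x := List.prefix_append _ _
      have hp2 : v <+: u ++ mApply (pf u v) x := by
        rw [heq]; exact List.prefix_append _ _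
      exact List.prefix_of_prefix_length_le hp2 hp1 (Nat.le_of_lt hgt)
    obtain ⟨s, hs⟩ := hpre
    subst hs
    have hsne : s ≠ [] := by
      rintro rfl; rw [List.append_nil] at hgt; exact Nat.lt_irrefl _ hgt
    rw [List.append_assoc] at heq
    have h2 := List.append_cancel_left heq
    rw [decomp₂, decomp₂] at h2
    cases y with
    | nil =>
      rw [show mApply hmor₂ [] = [] from rfl, mApply_nil] at h2
      exact absurd (List.append_eq_nil_iff.mp h2).1 hsne
    | cons c y' =>
      obtain ⟨t, ht⟩ := hmor₂_head c y'
      rw [ht, mApply_cons] at h2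
      have hlt' : s.length + v.length < n := by
        rw [List.length_append] at hn
        have := List.length_pos_iff.mpr hv
        omega
      have hcomm := ih _ hlt' s v hsne hv le_rfl (mApply hmor₂ x) t h2
      rw [List.append_assoc, hcomm]

theorem pf_swap {α : Type*} (u v : List α) (z : List Bool) :
    mApply (pf u v) z = mApply (pf v u) (z.map (fun c => !c)) := by
  induction z with
  | nil => rfl
  | cons c z' ih =>
    cases c <;> simp only [List.map_cons, mApply_cons, pf, Bool.not_true, Bool.not_false,
      cond_true, cond_false, ih]

theorem not_inj_comm {α : Type*} (u v : List α) :
    ∀ (x y : List Bool), mApply (pf u v) x = mApply (pf u v) y → x ≠ y →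
      u ++ v = v ++ u := by
  intro x
  induction x with
  | nil =>
    intro y h hne
    cases y with
    | nil => exact absurd rfl hne
    | cons d y' =>
      rw [mApply_nil, mApply_cons] at h
      have := (List.append_eq_nil_iff.mp h.symm).1
      cases d
      · simp only [pf, cond_false] at this; rw [this]; simp
      · simp only [pf, cond_true] at this; rw [this]; simp
  | cons c x' ih =>
    intro y h hne
    cases y with
    | nil =>
      rw [mApply_nil, mApply_cons] at h
      have := (List.append_eq_nil_iff.mp h).1
      cases c
      · simp only [pf, cond_false] at this; rw [this]; simp
      · simp only [pf, cond_true] at this; rw [this]; simp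
    | cons d y' =>
      by_cases hcd : c = d
      · subst hcd
        rw [mApply_cons, mApply_cons] at h
        exact ih y' (List.append_cancel_left h) (fun he => hne (by rw [he]))
      · by_cases hue : u = []
        · rw [hue]; simp
        by_cases hve : v = []
        · rw [hve]; simp
        cases c <;> cases d
        · exact absurd rfl hcd
        · -- c = false, d = true
          rw [mApply_cons, mApply_cons] at h
          simp only [pf, cond_false, cond_true] at h
          exact key (u.length + v.length) u v hue hve le_rfl x' y' h
        · -- c = true, d = false
          rw [mApply_cons, mApply_cons] at h
          simp only [pf, cond_false, cond_true] at h
          rw [pf_swap u v x', pf_swap u v y'] at h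
          exact (key (v.length + u.length) v u hve hue le_rfl _ _ h).symm
        · exact absurd rfl hcd

theorem code_inj {α : Type*} (u v : List α) (h : u ++ v ≠ v ++ u) :
    Function.Injective (mApply (pf u v)) := fun x y hxy =>
  by_contra fun hne => h (not_inj_comm u v x y hxy hne)

theorem comm_letter {β : Type*} (ψ : Bool → List β)
    (hc : ψ false ++ ψ true = ψ true ++ ψ false) (c : Bool) (w : List Bool) :
    ψ c ++ mApply ψ w = mApply ψ w ++ ψ c := by
  induction w with
  | nil => simp [mApply_nil]
  | cons d w' ih =>
    have hcd : ψ c ++ ψ d = ψ d ++ ψ c := by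
      cases c <;> cases d
      · rfl
      · exact hc
      · exact hc.symm
      · rfl
    rw [mApply_cons, ← List.append_assoc, hcd, List.append_assoc, ih, ← List.append_assoc]

theorem comm_words {β : Type*} (ψ : Bool → List β)
    (hc : ψ false ++ ψ true = ψ true ++ ψ false) (w₁ w₂ : List Bool) :
    mApply ψ w₁ ++ mApply ψ w₂ = mApply ψ w₂ ++ mApply ψ w₁ := by
  induction w₁ with
  | nil => simp [mApply_nil]
  | cons c w' ih =>
    rw [mApply_cons, List.append_assoc, ih, ← List.append_assoc,
      comm_letter ψ hc c w₂, List.append_assoc]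

theorem stmt2 (μ : Bool → List Bool) (hinj : Function.Injective (mApply μ)) :
    PrimPreserving μ ↔
      ∀ (ψ χ : Bool → List Bool), (∀ c, μ c = mApply ψ (χ c)) →
        (PrimPreserving χ ∧ Function.Injective (mApply ψ) ∧
          ∀ w, MuPower ψ w → ¬ ∃ l : List Bool, l ≠ [] ∧ w = mApply χ l) := by
  constructor
  · intro hP ψ χ hcomp
    have hμψχ : ∀ w, mApply μ w = mApply ψ (mApply χ w) := by
      intro w
      rw [show μ = fun c => mApply ψ (χ c) from funext hcomp, mApply_comp]
    refine ⟨?_, ?_, ?_⟩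
    · -- χ is primitivity-preserving
      intro w hw
      have hμw := hP w hw
      constructor
      · intro h0
        apply hμw.1
        rw [hμψχ, h0, mApply_nil]
      · intro z k hk
        apply hμw.2 (mApply ψ z) k
        rw [hμψχ, hk, mApply_wpow]
    · -- ψ is injective
      have hψpf : ψ = pf (ψ false) (ψ true) := by
        funext c; cases c <;> rfl
      have hne : ψ false ++ ψ true ≠ ψ true ++ ψ false := by
        intro hc
        have h1 : mApply μ [false, true] = mApply μ [true, false] := by
          rw [mApply_cons, mApply_cons, mApply_cons, mApply_cons, mApply_nil,
            List.append_nil, List.append_nil, hcomp, hcomp]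
          exact comm_words ψ hc (χ false) (χ true)
        have := hinj h1
        simp at this
      rw [hψpf]
      exact code_inj _ _ hne
    · -- no ψ-power lies in {χ(a), χ(b)}⁺
      rintro w hw ⟨l, hl, hwl⟩
      obtain ⟨hwprim, z, k, hz, hk1, hψwk⟩ := hw
      have hlprim : Primitive l := by
        refine ⟨hl, fun m j hmj => ?_⟩
        exact hwprim.2 (mApply χ m) j (by rw [hwl, hmj, mApply_wpow])
      have hk := (hP l hlprim).2 z k (by rw [hμψχ, ← hwl, hψwk])
      omega
  · intro h
    obtain ⟨-, -, h3⟩ := h μ (fun c => [c]) (fun c => by simp [mApply])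
    intro w hw
    have hwne : mApply μ w ≠ [] := by
      intro h0
      exact hw.1 (hinj (h0.trans (mApply_nil μ).symm))
    refine ⟨hwne, ?_⟩
    intro y j hj
    by_contra hj1
    have hj0 : j ≠ 0 := by
      rintro rfl
      exact hwne hj
    have hj2 : 2 ≤ j := by omega
    have hyne : y ≠ [] := by
      rintro rfl
      rw [wpow_nil] at hj
      exact hwne hj
    obtain ⟨z, m, hz, hm, hym⟩ := prim_root y hyne
    have hmp : MuPower μ w := by
      refine ⟨hw, z, j * m, hz, ?_, by rw [hj, hym, wpow_mul]⟩
      have := Nat.mul_le_mul hj2 hm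
      omega
    exact h3 w hmp ⟨w, hw.1, by simp [mApply]⟩
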